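/- Assume conditions (P0)–(P3) hold for the sequence (q_{M_L}, φ_{M_L}) indexed by even positive integers L, and assume M_L² / log L → ∞ as L → ∞. Then lim_{L→∞} sup_{x ∈ T'_L} (1/L²) |∑_{y ∈ T'_L} e^{2πi x·y / L} / (1 − φ_{M_L}(2π y / L))| = 0. -/

import Mathlib

open Filter MeasureTheory Real Finset
open scoped BigOperators

noncomputable section

/-- `T_k = (−k/2, k/2]² ∩ ℤ²`. -/
def Tset (k : ℝ) : Finset (ℤ × ℤ) :=
  Finset.Ioc ⌊-k / 2⌋ ⌊k / 2⌋ ×ˢ Finset.Ioc ⌊-k / 2⌋ ⌊k / 2⌋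

/-- `Λ_k = [−k/2, k/2]² ∩ ℤ²`. -/
def Lam (k : ℝ) : Finset (ℤ × ℤ) :=
  Finset.Icc ⌈-k / 2⌉ ⌊k / 2⌋ ×ˢ Finset.Icc ⌈-k / 2⌉ ⌊k / 2⌋

open scoped Classical in
/-- `D_k = {x ∈ ℤ² : |x| ≤ k/2}` (Euclidean norm). -/
def Dset (k : ℝ) : Finset (ℤ × ℤ) :=
  (Lam k).filter fun x => Real.sqrt ((x.1 : ℝ) ^ 2 + (x.2 : ℝ) ^ 2) ≤ k / 2

/-- sup (ℓ∞) norm on ℝ². -/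
def supNorm (θ : ℝ × ℝ) : ℝ := max |θ.1| |θ.2|

/-- the closed ℓ∞-ball `B(r)` in ℝ². -/
def Bset (r : ℝ) : Set (ℝ × ℝ) := {θ | supNorm θ ≤ r}

/-- squared Euclidean norm `|θ|²` on ℝ². -/
def sqNormR (θ : ℝ × ℝ) : ℝ := θ.1 ^ 2 + θ.2 ^ 2

/-- squared Euclidean norm `|y|²` of a lattice point. -/
def sqNorm (y : ℤ × ℤ) : ℝ := (y.1 : ℝ) ^ 2 + (y.2 : ℝ) ^ 2

/-- dot product `θ · x` of θ ∈ ℝ² and x ∈ ℤ². -/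
def dotP (θ : ℝ × ℝ) (x : ℤ × ℤ) : ℝ := θ.1 * x.1 + θ.2 * x.2

/-- `e^{iθ·x}`. -/
def cexp (θ : ℝ × ℝ) (x : ℤ × ℤ) : ℂ := Complex.exp (Complex.I * (dotP θ x : ℂ))

/-- `e^{2πi x·y/L}`. -/
def eL (L : ℕ) (x y : ℤ × ℤ) : ℂ :=
  Complex.exp (2 * (π : ℂ) * Complex.I * ((x.1 * y.1 + x.2 * y.2 : ℤ) : ℂ) / (L : ℂ))

/-- the filter of large even natural numbers. -/
def evenAtTop : Filter ℕ := Filter.atTop ⊓ Filter.principal {n | Even n}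

/-- the Fourier point `2πy/L ∈ ℝ²`. -/
def fourierTheta (L : ℕ) (y : ℤ × ℤ) : ℝ × ℝ := (2 * π * y.1 / L, 2 * π * y.2 / L)

/-- the characteristic function `φ(θ) = ∑_x e^{iθ·x} q(x)` of a jump distribution
supported in `Λ_m`; it is real-valued by symmetry, so we take the real part. -/
def phiOf (m : ℕ) (qq : ℤ × ℤ → ℝ) (θ : ℝ × ℝ) : ℝ :=
  (∑ x ∈ Lam m, cexp θ x * (qq x : ℂ)).re

/-- Condition (P0): `q` is a symmetric probability distribution supported in
`Λ'_m = Λ_m \ {0}`, with values in [0,1] and equal, positive coordinate variances. -/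
def CondP0 (m : ℕ) (qq : ℤ × ℤ → ℝ) : Prop :=
  (∀ x, 0 ≤ qq x ∧ qq x ≤ 1) ∧
  (∀ x, x ∉ (Lam m).erase 0 → qq x = 0) ∧
  (∑ x ∈ (Lam m).erase 0, qq x = 1) ∧
  (∀ x, qq (-x) = qq x) ∧
  (∑ x ∈ Lam m, (x.1 : ℝ) ^ 2 * qq x = ∑ x ∈ Lam m, (x.2 : ℝ) ^ 2 * qq x) ∧
  (0 < ∑ x ∈ Lam m, (x.1 : ℝ) ^ 2 * qq x)

/-- Condition (P1) with constant `σ² = σ2`. -/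
def CondP1 (M : ℕ → ℕ) (q : ℕ → ℤ × ℤ → ℝ) (σ2 : ℝ) : Prop :=
  ∀ ε > (0 : ℝ), ∃ δ > (0 : ℝ), ∀ᶠ (L : ℕ) in evenAtTop, ∀ θ : ℝ × ℝ, θ ≠ 0 →
    supNorm θ ≤ δ / M L →
    (1 - phiOf (M L) (q L) θ) / (σ2 * (M L : ℝ) ^ 2 * sqNormR θ / 2)
      ∈ Set.Ioo (1 - ε) (1 + ε)

/-- Condition (P2). -/
def CondP2 (M : ℕ → ℕ) (q : ℕ → ℤ × ℤ → ℝ) : Prop :=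
  ∀ δ > (0 : ℝ), ∃ δ' > (0 : ℝ), ∃ ζ > (0 : ℝ), ∀ᶠ (L : ℕ) in evenAtTop, ∀ θ : ℝ × ℝ,
    supNorm θ ≤ δ' → ¬ supNorm θ ≤ δ / M L → 1 - phiOf (M L) (q L) θ > ζ

/-- Condition (P3). -/
def CondP3 (M : ℕ → ℕ) (q : ℕ → ℤ × ℤ → ℝ) : Prop :=
  ∀ ε > (0 : ℝ), ∀ a > (0 : ℝ), ∀ᶠ (L : ℕ) in evenAtTop, ∀ θ : ℝ × ℝ,
    supNorm θ ≤ π → ¬ supNorm θ ≤ a → |phiOf (M L) (q L) θ| < ε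

/-- `G_L(x,λ) = L⁻² ∑_{y ∈ T_L} e^{2πi x·y/L} / (1 + λ − φ_{M_L}(2πy/L))`. -/
def Gfun (M : ℕ → ℕ) (q : ℕ → ℤ × ℤ → ℝ) (L : ℕ) (x : ℤ × ℤ) (lam : ℝ) : ℂ :=
  ((L : ℂ) ^ 2)⁻¹ * ∑ y ∈ Tset L,
    eL L x y / ((1 + lam - phiOf (M L) (q L) (fourierTheta L y) : ℝ) : ℂ)

open scoped Classical in
/-- the annulus `A_L(α, v)`. -/
def Aset (L : ℕ) (α v : ℝ) : Finset (ℤ × ℤ) :=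
  if α = 0 then (Tset v).erase 0
  else if α = 1 then Tset L \ Tset (L / v)
  else Tset ((L : ℝ) ^ α * v) \ Tset ((L : ℝ) ^ α / v)

/-- the uniform distribution `u_m` on `Λ'_m = Λ_m \ {0}`. -/
def uunif (m : ℕ) (x : ℤ × ℤ) : ℝ :=
  if x ∈ (Lam m).erase 0 then (((Lam m).erase 0).card : ℝ)⁻¹ else 0

/-- `q_M(x) = c_M f(x/M) u_M(x)`. -/
def qMf (f : ℝ × ℝ → ℝ) (c : ℕ → ℝ) (m : ℕ) (x : ℤ × ℤ) : ℝ :=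
  c m * f ((x.1 : ℝ) / m, (x.2 : ℝ) / m) * uunif m x

section AuxLemmas

lemma tset_eq (L : ℕ) (c : ℤ) (hc : (L : ℝ) = 2 * c) :
    Tset L = Finset.Ioc (-c) c ×ˢ Finset.Ioc (-c) c := by
  have h1 : ((L : ℝ)) / 2 = (c : ℝ) := by rw [hc]; ring
  have h2 : (-(L : ℝ)) / 2 = ((-c : ℤ) : ℝ) := by push_cast; rw [hc]; ring
  rw [Tset, h1, h2, Int.floor_intCast, Int.floor_intCast]

lemma sum_zpow_Ioc (A : ℂ) (hA0 : A ≠ 0) (hA1 : A ≠ 1) (c : ℤ) (hc : 0 ≤ c)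
    (hAL : A ^ (2 * c) = 1) : ∑ u ∈ Finset.Ioc (-c) c, A ^ u = 0 := by
  set n : ℕ := (2 * c).toNat with hn
  have hn' : ((n : ℤ)) = 2 * c := Int.toNat_of_nonneg (by omega)
  have key : ∑ u ∈ Finset.Ioc (-c) c, A ^ u
      = ∑ j ∈ Finset.range n, A ^ ((j : ℤ) + 1 - c) := by
    refine Finset.sum_nbij' (fun u => (u + c - 1).toNat) (fun j => (j : ℤ) + 1 - c) ?_ ?_ ?_ ?_ ?_
    · intro u hu
      simp only [Finset.mem_Ioc] at hu
      simp only [Finset.mem_range]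
      omega
    · intro j hj
      simp only [Finset.mem_range] at hj
      simp only [Finset.mem_Ioc]
      omega
    · intro u hu
      simp only [Finset.mem_Ioc] at hu
      omega
    · intro j hj
      simp only [Finset.mem_range] at hj
      omega
    · intro u hu
      simp only [Finset.mem_Ioc] at hu
      congr 1
      omega
  rw [key]
  have step : ∀ j ∈ Finset.range n, A ^ ((j : ℤ) + 1 - c) = A ^ (1 - c) * A ^ j := by
    intro j _
    rw [show (j : ℤ) + 1 - c = (1 - c) + (j : ℤ) by ring, zpow_add₀ hA0, zpow_natCast]
  rw [Finset.sum_congr rfl step, ← Finset.mul_sum, geom_sum_eq hA1]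
  have hAn : A ^ n = 1 := by
    have : A ^ (n : ℤ) = 1 := by rw [hn']; exact hAL
    rwa [zpow_natCast] at this
  rw [hAn]
  simp

lemma inner_char_sum (L : ℕ) (c : ℤ) (hc : (L : ℝ) = 2 * c) (hc1 : 1 ≤ c)
    (t : ℤ) (ht0 : t ≠ 0) (ht : t ∈ Finset.Ioc (-c) c) :
    ∑ u ∈ Finset.Ioc (-c) c, Complex.exp (2 * (π : ℂ) * Complex.I * (t : ℂ) * (u : ℂ) / (L : ℂ)) = 0 := by
  have hLZ : (L : ℤ) = 2 * c := by exact_mod_cast hc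
  have hLR : (0:ℝ) < (L:ℝ) := by
    have : (1:ℝ) ≤ (c:ℝ) := by exact_mod_cast hc1
    rw [hc]; linarith
  have hLn : L ≠ 0 := (Nat.cast_pos.mp hLR).ne'
  have hL0 : (L : ℂ) ≠ 0 := Nat.cast_ne_zero.mpr hLn
  simp only [Finset.mem_Ioc] at ht
  set A : ℂ := Complex.exp (2 * (π : ℂ) * Complex.I * (t : ℂ) / (L : ℂ)) with hA
  have hA0 : A ≠ 0 := Complex.exp_ne_zero _
  have hexp : ∀ u : ℤ, Complex.exp (2 * (π : ℂ) * Complex.I * (t : ℂ) * (u : ℂ) / (L : ℂ)) = A ^ u := by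
    intro u
    rw [hA, ← Complex.exp_int_mul]
    congr 1
    ring
  have hA1 : A ≠ 1 := by
    intro h
    rw [hA, Complex.exp_eq_one_iff] at h
    obtain ⟨k, hk⟩ := h
    have h2πI : (2 * (π : ℂ) * Complex.I) ≠ 0 := by
      simpa [mul_comm, mul_assoc] using Complex.two_pi_I_ne_zero
    have htk : (t : ℂ) = (k : ℂ) * (L : ℂ) := by
      have h1 : 2 * (π:ℂ) * Complex.I * (t:ℂ) = 2 * (π:ℂ) * Complex.I * ((k:ℂ) * (L:ℂ)) := by
        have := hk
        field_simp at this
        linear_combination (2 * (π:ℂ) * Complex.I) * this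
      exact mul_left_cancel₀ h2πI h1
    have htk' : t = k * (L : ℤ) := by exact_mod_cast htk
    rcases eq_or_ne k 0 with rfl | hk0
    · rw [zero_mul] at htk'; exact ht0 htk'
    · have h1 : 1 ≤ |k| := Int.one_le_abs hk0
      have h2 : |t| = |k| * (2 * c) := by
        rw [htk', hLZ, abs_mul, abs_of_nonneg (by omega : (0:ℤ) ≤ 2 * c)]
      have habs : |t| ≤ c := abs_le.mpr ⟨le_of_lt ht.1, ht.2⟩
      nlinarith
  have hAL : A ^ (2 * c) = 1 := by
    rw [hA, ← Complex.exp_int_mul]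
    have heq : ((2 * c : ℤ) : ℂ) * (2 * (π : ℂ) * Complex.I * (t : ℂ) / (L : ℂ))
        = (t : ℂ) * (2 * (π : ℂ) * Complex.I) := by
      have hLc : (L : ℂ) = 2 * (c : ℂ) := by
        have : ((L:ℝ) : ℂ) = ((2 * c : ℝ) : ℂ) := by exact_mod_cast congrArg Complex.ofReal hc
        push_cast at this ⊢
        exact this
      rw [hLc]
      have hc0 : (c : ℂ) ≠ 0 := by
        have : c ≠ 0 := by omega
        exact_mod_cast this
      field_simp
      push_cast; ring
    rw [heq, Complex.exp_int_mul_two_pi_mul_I]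
  calc ∑ u ∈ Finset.Ioc (-c) c, Complex.exp (2 * (π : ℂ) * Complex.I * (t : ℂ) * (u : ℂ) / (L : ℂ))
      = ∑ u ∈ Finset.Ioc (-c) c, A ^ u := Finset.sum_congr rfl (fun u _ => hexp u)
    _ = 0 := sum_zpow_Ioc A hA0 hA1 c (by omega) hAL

end AuxLemmas
section Aux2

lemma eL_split (L : ℕ) (x y : ℤ × ℤ) :
    eL L x y = Complex.exp (2 * (π : ℂ) * Complex.I * (x.1 : ℂ) * (y.1 : ℂ) / (L : ℂ)) *
      Complex.exp (2 * (π : ℂ) * Complex.I * (x.2 : ℂ) * (y.2 : ℂ) / (L : ℂ)) := by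
  rw [eL, ← Complex.exp_add]
  congr 1
  push_cast
  ring

lemma eL_norm (L : ℕ) (hL : L ≠ 0) (x y : ℤ × ℤ) : ‖eL L x y‖ = 1 := by
  have hLR : ((L:ℝ)) ≠ 0 := Nat.cast_ne_zero.mpr hL
  have : 2 * (π : ℂ) * Complex.I * ((x.1 * y.1 + x.2 * y.2 : ℤ) : ℂ) / (L : ℂ)
      = ((2 * π * ((x.1 * y.1 + x.2 * y.2 : ℤ) : ℝ) / L : ℝ) : ℂ) * Complex.I := by
    push_cast
    ring
  rw [eL, this, Complex.norm_exp_ofReal_mul_I]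

lemma eL_zero (L : ℕ) (x : ℤ × ℤ) : eL L x 0 = 1 := by
  simp [eL]

lemma char_sum_zero (L : ℕ) (c : ℤ) (hc : (L : ℝ) = 2 * c) (hc1 : 1 ≤ c)
    (x : ℤ × ℤ) (hx : x ∈ (Tset L).erase 0) : ∑ y ∈ Tset L, eL L x y = 0 := by
  rw [tset_eq L c hc]
  rw [Finset.mem_erase, tset_eq L c hc, Finset.mem_product, Finset.mem_Ioc, Finset.mem_Ioc] at hx
  obtain ⟨hx0, hx1, hx2⟩ := hx
  have hsplit : ∑ y ∈ Finset.Ioc (-c) c ×ˢ Finset.Ioc (-c) c, eL L x y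
      = (∑ u ∈ Finset.Ioc (-c) c, Complex.exp (2 * (π : ℂ) * Complex.I * (x.1 : ℂ) * (u : ℂ) / (L : ℂ))) *
        (∑ v ∈ Finset.Ioc (-c) c, Complex.exp (2 * (π : ℂ) * Complex.I * (x.2 : ℂ) * (v : ℂ) / (L : ℂ))) := by
    rw [Finset.sum_mul_sum, Finset.sum_product]
    exact Finset.sum_congr rfl fun u _ => Finset.sum_congr rfl fun v _ => eL_split L x (u, v)
  rw [hsplit]
  rcases (by
    by_contra h
    push_neg at h
    exact hx0 (Prod.ext h.1 h.2) : x.1 ≠ 0 ∨ x.2 ≠ 0) with h | h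
  · rw [inner_char_sum L c hc hc1 x.1 h (Finset.mem_Ioc.mpr hx1), zero_mul]
  · rw [inner_char_sum L c hc hc1 x.2 h (Finset.mem_Ioc.mpr hx2), mul_zero]

lemma char_sum_erase (L : ℕ) (c : ℤ) (hc : (L : ℝ) = 2 * c) (hc1 : 1 ≤ c)
    (x : ℤ × ℤ) (hx : x ∈ (Tset L).erase 0) :
    ∑ y ∈ (Tset L).erase 0, eL L x y = -1 := by
  have h0 : (0 : ℤ × ℤ) ∈ Tset L := by
    rw [tset_eq L c hc]
    simp only [Finset.mem_product, Finset.mem_Ioc, Prod.fst_zero, Prod.snd_zero]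
    constructor <;> constructor <;> omega
  have := Finset.add_sum_erase _ (eL L x) h0
  rw [char_sum_zero L c hc hc1 x hx, eL_zero] at this
  linear_combination this

end Aux2
section Aux3

lemma harmonic_le (n : ℕ) : ∑ k ∈ Finset.Icc 1 n, (1:ℝ)/k ≤ 1 + Real.log n := by
  induction n with
  | zero => simp
  | succ n ih =>
    rcases Nat.eq_zero_or_pos n with h0 | hp
    · subst h0
      norm_num
    · rw [Finset.sum_Icc_succ_top (by omega : 1 ≤ n + 1)]
      have hn0 : (0:ℝ) < n := by exact_mod_cast hp
      have hn1 : (0:ℝ) < (n:ℝ) + 1 := by linarith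
      have hlog : Real.log n + 1/((n:ℝ)+1) ≤ Real.log ((n:ℝ)+1) := by
        have hpos : (0:ℝ) < (n:ℝ)/((n:ℝ)+1) := by positivity
        have h1 := Real.log_le_sub_one_of_pos hpos
        rw [Real.log_div (ne_of_gt hn0) (ne_of_gt hn1)] at h1
        have h2 : (n:ℝ)/((n:ℝ)+1) - 1 = -(1/((n:ℝ)+1)) := by field_simp; ring
        linarith
      push_cast
      push_cast at ih
      linarith

lemma harmonic_int_le (c : ℤ) (hc : 1 ≤ c) :
    ∑ k ∈ Finset.Icc (1:ℤ) c, (1:ℝ)/k ≤ 1 + Real.log c := by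
  have key : ∑ k ∈ Finset.Icc (1:ℤ) c, (1:ℝ)/k = ∑ k ∈ Finset.Icc 1 c.toNat, (1:ℝ)/k := by
    refine Finset.sum_nbij' (fun k => k.toNat) (fun k => (k : ℤ)) ?_ ?_ ?_ ?_ ?_
    · intro k hk; simp only [Finset.mem_Icc] at hk ⊢; omega
    · intro k hk; simp only [Finset.mem_Icc] at hk ⊢; omega
    · intro k hk; simp only [Finset.mem_Icc] at hk; omega
    · intro k hk; simp only [Finset.mem_Icc] at hk; omega
    · intro k hk; simp only [Finset.mem_Icc] at hk
      have h0 : ((k.toNat : ℕ) : ℝ) = (k : ℝ) := by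
        exact_mod_cast Int.toNat_of_nonneg (by omega : (0:ℤ) ≤ k)
      rw [h0]
  rw [key]
  have := harmonic_le c.toNat
  have hcast : ((c.toNat : ℕ) : ℝ) = (c : ℝ) := by exact_mod_cast Int.toNat_of_nonneg (by omega)
  rwa [hcast] at this

/-- the sum of 1/|y|² over the punctured discrete torus box is at most 8(1+log c). -/
lemma sum_inv_sqNorm_le (c : ℤ) (hc : 1 ≤ c) :
    ∑ y ∈ (Finset.Ioc (-c) c ×ˢ Finset.Ioc (-c) c).erase 0, 1 / sqNorm y
      ≤ 8 * (1 + Real.log c) := by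
  classical
  set T' := (Finset.Ioc (-c) c ×ˢ Finset.Ioc (-c) c).erase 0 with hT'
  have hmaps : ∀ y ∈ T', (max |y.1| |y.2|) ∈ Finset.Icc (1:ℤ) c := by
    intro y hy
    rw [hT', Finset.mem_erase, Finset.mem_product, Finset.mem_Ioc, Finset.mem_Ioc] at hy
    obtain ⟨hy0, hy1, hy2⟩ := hy
    simp only [Finset.mem_Icc]
    constructor
    · by_contra h
      push_neg at h
      have h1 : |y.1| < 1 := lt_of_le_of_lt (le_max_left _ _) h
      have h2 : |y.2| < 1 := lt_of_le_of_lt (le_max_right _ _) h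
      rw [Int.abs_lt_one_iff] at h1 h2
      exact hy0 (Prod.ext h1 h2)
    · exact max_le (abs_le.mpr ⟨by omega, hy1.2⟩) (abs_le.mpr ⟨by omega, hy2.2⟩)
  rw [← Finset.sum_fiberwise_of_maps_to hmaps (fun y => 1 / sqNorm y)]
  have fiber_bound : ∀ k ∈ Finset.Icc (1:ℤ) c,
      ∑ y ∈ T'.filter (fun y => max |y.1| |y.2| = k), 1 / sqNorm y ≤ 8 * ((1:ℝ)/k) := by
    intro k hk
    simp only [Finset.mem_Icc] at hk
    have hkR : (1:ℝ) ≤ (k:ℝ) := by exact_mod_cast hk.1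
    -- each term is at most 1/k²
    have hterm : ∀ y ∈ T'.filter (fun y => max |y.1| |y.2| = k), 1 / sqNorm y ≤ 1/(k:ℝ)^2 := by
      intro y hy
      rw [Finset.mem_filter] at hy
      have hmax := hy.2
      have hsq : ((k:ℝ))^2 ≤ sqNorm y := by
        rcases max_choice |y.1| |y.2| with h | h
        · rw [h] at hmax
          have : ((y.1:ℝ))^2 = ((k:ℝ))^2 := by
            have : y.1^2 = k^2 := by rw [← hmax]; rw [sq_abs]
            exact_mod_cast congrArg (fun z : ℤ => (z:ℝ)) this
          rw [sqNorm]
          nlinarith [sq_nonneg ((y.2:ℝ))]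
        · rw [h] at hmax
          have : ((y.2:ℝ))^2 = ((k:ℝ))^2 := by
            have : y.2^2 = k^2 := by rw [← hmax]; rw [sq_abs]
            exact_mod_cast congrArg (fun z : ℤ => (z:ℝ)) this
          rw [sqNorm]
          nlinarith [sq_nonneg ((y.1:ℝ))]
      have hk2 : (0:ℝ) < (k:ℝ)^2 := by positivity
      exact one_div_le_one_div_of_le hk2 hsq
    -- fiber cardinality is at most 8k
    have hcard : ((T'.filter (fun y => max |y.1| |y.2| = k)).card : ℝ) ≤ 8 * (k:ℝ) := by
      have hsub : T'.filter (fun y => max |y.1| |y.2| = k) ⊆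
          (Finset.Icc (-k) k ×ˢ Finset.Icc (-k) k) \ (Finset.Icc (-(k-1)) (k-1) ×ˢ Finset.Icc (-(k-1)) (k-1)) := by
        intro y hy
        rw [Finset.mem_filter] at hy
        have hmax := hy.2
        have h1 : |y.1| ≤ k := le_of_max_le_left (le_of_eq hmax)
        have h2 : |y.2| ≤ k := le_of_max_le_right (le_of_eq hmax)
        rw [Finset.mem_sdiff, Finset.mem_product, Finset.mem_product, Finset.mem_Icc, Finset.mem_Icc,
          Finset.mem_Icc, Finset.mem_Icc]
        rw [abs_le] at h1 h2
        refine ⟨⟨h1, h2⟩, ?_⟩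
        intro hcon
        obtain ⟨ha, hb⟩ := hcon
        have : max |y.1| |y.2| ≤ k - 1 := by
          simp only [max_le_iff, abs_le]
          omega
        omega
      have hcc := Finset.card_le_card hsub
      have hss : (Finset.Icc (-(k-1)) (k-1) ×ˢ Finset.Icc (-(k-1)) (k-1)) ⊆
          (Finset.Icc (-k) k ×ˢ Finset.Icc (-k) k) := by
        intro y hy
        rw [Finset.mem_product, Finset.mem_Icc, Finset.mem_Icc] at hy ⊢
        omega
      rw [Finset.card_sdiff_of_subset hss] at hcc
      have c1 : (Finset.Icc (-k) k ×ˢ Finset.Icc (-k) k).card = ((2*k+1).toNat)^2 := by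
        rw [Finset.card_product, Int.card_Icc]
        have : (k + 1 - -k) = 2*k+1 := by ring
        rw [this, sq]
      have c2 : (Finset.Icc (-(k-1)) (k-1) ×ˢ Finset.Icc (-(k-1)) (k-1)).card = ((2*k-1).toNat)^2 := by
        rw [Finset.card_product, Int.card_Icc]
        have : ((k-1) + 1 - -(k-1)) = 2*k-1 := by ring
        rw [this, sq]
      rw [c1, c2] at hcc
      have hle : ((2*k-1).toNat)^2 ≤ ((2*k+1).toNat)^2 := by
        have : (2*k-1).toNat ≤ (2*k+1).toNat := by omega
        exact Nat.pow_le_pow_left this 2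
      have : ((T'.filter (fun y => max |y.1| |y.2| = k)).card : ℝ)
          ≤ (((2*k+1).toNat)^2 : ℕ) - (((2*k-1).toNat)^2 : ℕ) := by
        rw [← Nat.cast_sub hle]
        exact_mod_cast hcc
      have e1 : (((2*k+1).toNat : ℤ) : ℝ) = 2*(k:ℝ)+1 := by
        have : ((2*k+1).toNat : ℤ) = 2*k+1 := Int.toNat_of_nonneg (by omega)
        rw [this]; push_cast; ring
      have e2 : (((2*k-1).toNat : ℤ) : ℝ) = 2*(k:ℝ)-1 := by
        have : ((2*k-1).toNat : ℤ) = 2*k-1 := Int.toNat_of_nonneg (by omega)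
        rw [this]; push_cast; ring
      have : ((T'.filter (fun y => max |y.1| |y.2| = k)).card : ℝ)
          ≤ (2*(k:ℝ)+1)^2 - (2*(k:ℝ)-1)^2 := by
        calc ((T'.filter (fun y => max |y.1| |y.2| = k)).card : ℝ)
            ≤ (((2*k+1).toNat)^2 : ℕ) - (((2*k-1).toNat)^2 : ℕ) := this
          _ = (2*(k:ℝ)+1)^2 - (2*(k:ℝ)-1)^2 := by
              push_cast
              rw [show (((2*k+1).toNat : ℕ) : ℝ) = ((((2*k+1).toNat : ℤ)) : ℝ) by push_cast; ring,
                show (((2*k-1).toNat : ℕ) : ℝ) = ((((2*k-1).toNat : ℤ)) : ℝ) by push_cast; ring, e1, e2]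
      nlinarith
    calc ∑ y ∈ T'.filter (fun y => max |y.1| |y.2| = k), 1 / sqNorm y
        ≤ ∑ _y ∈ T'.filter (fun y => max |y.1| |y.2| = k), 1/(k:ℝ)^2 := Finset.sum_le_sum hterm
      _ = ((T'.filter (fun y => max |y.1| |y.2| = k)).card : ℝ) * (1/(k:ℝ)^2) := by
          rw [Finset.sum_const, nsmul_eq_mul]
      _ ≤ 8 * (k:ℝ) * (1/(k:ℝ)^2) := by
          apply mul_le_mul_of_nonneg_right hcard
          positivity
      _ = 8 * ((1:ℝ)/k) := by
          field_simp
  calc ∑ k ∈ Finset.Icc (1:ℤ) c, ∑ y ∈ T'.filter (fun y => max |y.1| |y.2| = k), 1 / sqNorm y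
      ≤ ∑ k ∈ Finset.Icc (1:ℤ) c, 8 * ((1:ℝ)/k) := Finset.sum_le_sum fiber_bound
    _ = 8 * ∑ k ∈ Finset.Icc (1:ℤ) c, (1:ℝ)/k := by rw [Finset.mul_sum]
    _ ≤ 8 * (1 + Real.log c) := by
        have := harmonic_int_le c hc
        linarith

end Aux3
section Aux4

lemma cexp_norm (θ : ℝ × ℝ) (x : ℤ × ℤ) : ‖cexp θ x‖ = 1 := by
  rw [cexp, mul_comm, Complex.norm_exp_ofReal_mul_I]

lemma abs_phiOf_le_one (m : ℕ) (qq : ℤ × ℤ → ℝ) (h0 : CondP0 m qq) (θ : ℝ × ℝ) :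
    |phiOf m qq θ| ≤ 1 := by
  obtain ⟨hrange, hsupp, hsum, -⟩ := h0
  have h1 : |phiOf m qq θ| ≤ ∑ x ∈ Lam m, qq x := by
    calc |phiOf m qq θ| ≤ ‖∑ x ∈ Lam m, cexp θ x * (qq x : ℂ)‖ :=
          Complex.abs_re_le_norm _
      _ ≤ ∑ x ∈ Lam m, ‖cexp θ x * (qq x : ℂ)‖ := norm_sum_le _ _
      _ = ∑ x ∈ Lam m, qq x := by
          refine Finset.sum_congr rfl fun x _ => ?_
          rw [norm_mul]
          rw [show ‖cexp θ x‖ = 1 from cexp_norm θ x]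
          rw [one_mul, Complex.norm_real, Real.norm_eq_abs, abs_of_nonneg (hrange x).1]
  have h2 : ∑ x ∈ Lam (m:ℝ), qq x = 1 := by
    by_cases hm : (0 : ℤ × ℤ) ∈ Lam (m:ℝ)
    · rw [← Finset.add_sum_erase _ qq hm, hsum]
      have : qq 0 = 0 := hsupp 0 (Finset.notMem_erase _ _)
      rw [this, zero_add]
    · rw [← hsum]
      congr 1
      exact (Finset.erase_eq_of_notMem hm).symm
  rw [h2] at h1
  exact h1

lemma fourierTheta_ne_zero (L : ℕ) (hL : L ≠ 0) (y : ℤ × ℤ) (hy : y ≠ 0) :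
    fourierTheta L y ≠ 0 := by
  intro h
  rw [fourierTheta, Prod.ext_iff] at h
  simp only [Prod.fst_zero, Prod.snd_zero] at h
  have hLR : ((L:ℝ)) ≠ 0 := Nat.cast_ne_zero.mpr hL
  have h2π : (2*π) ≠ 0 := by positivity
  apply hy
  have key : ∀ t : ℤ, 2 * π * (t:ℝ) / (L:ℝ) = 0 → t = 0 := by
    intro t ht
    rw [div_eq_zero_iff] at ht
    rcases ht with h' | h'
    · rcases mul_eq_zero.mp h' with h'' | h''
      · exact absurd h'' h2π
      · exact_mod_cast h''
    · exact absurd h' hLR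
  exact Prod.ext (key y.1 h.1) (key y.2 h.2)

lemma sqNormR_fourierTheta (L : ℕ) (hL : L ≠ 0) (y : ℤ × ℤ) :
    sqNormR (fourierTheta L y) = 4 * π ^ 2 * sqNorm y / (L:ℝ)^2 := by
  have hLR : ((L:ℝ)) ≠ 0 := Nat.cast_ne_zero.mpr hL
  rw [sqNormR, fourierTheta, sqNorm]
  field_simp
  ring

lemma supNorm_fourierTheta_le_pi (L : ℕ) (c : ℤ) (hc : (L:ℝ) = 2*c) (hc1 : 1 ≤ c)
    (y : ℤ × ℤ) (hy1 : -c < y.1 ∧ y.1 ≤ c) (hy2 : -c < y.2 ∧ y.2 ≤ c) :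
    supNorm (fourierTheta L y) ≤ π := by
  have hpi := Real.pi_pos
  have hcR : (1:ℝ) ≤ (c:ℝ) := by exact_mod_cast hc1
  have hLR : (0:ℝ) < (L:ℝ) := by rw [hc]; linarith
  have key : ∀ t : ℤ, -c < t → t ≤ c → |2 * π * (t:ℝ) / L| ≤ π := by
    intro t h1 h2
    have htR : |(t:ℝ)| ≤ (c:ℝ) := by
      have : |t| ≤ c := abs_le.mpr ⟨by omega, h2⟩
      exact_mod_cast this
    rw [abs_div, abs_of_pos hLR, div_le_iff₀ hLR, hc]
    have : |2 * π * (t:ℝ)| = 2 * π * |(t:ℝ)| := by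
      rw [abs_mul, abs_of_pos (by linarith : (0:ℝ) < 2*π)]
    rw [this]
    nlinarith
  rw [supNorm, fourierTheta]
  exact max_le (key y.1 hy1.1 hy1.2) (key y.2 hy2.1 hy2.2)

end Aux4
set_option maxHeartbeats 2000000 in
/-- Equation (5.14): if (P0)–(P3) hold and `M_L²/log L → ∞`, then
`sup_{x ∈ T'_L} L⁻² |∑_{y ∈ T'_L} e^{2πi x·y/L}/(1 − φ_{M_L}(2πy/L))| → 0`. -/
theorem sum_over_torus_uniformly_small (M : ℕ → ℕ) (q : ℕ → ℤ × ℤ → ℝ) (σ2 : ℝ) (hσ : 0 < σ2)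
    (hMeven : ∀ L : ℕ, Even (M L) ∧ 0 < M L)
    (hP0 : ∀ L : ℕ, Even L → 0 < L → CondP0 (M L) (q L))
    (hP1 : CondP1 M q σ2) (hP2 : CondP2 M q) (hP3 : CondP3 M q)
    (hM2 : Tendsto (fun L : ℕ => (M L : ℝ) ^ 2 / Real.log L) evenAtTop atTop) :
    ∀ ε > (0 : ℝ), ∀ᶠ (L : ℕ) in evenAtTop, ∀ x ∈ (Tset L).erase 0,
      ((L : ℝ) ^ 2)⁻¹ *
          ‖∑ y ∈ (Tset L).erase 0,
              eL L x y / ((1 - phiOf (M L) (q L) (fourierTheta L y) : ℝ) : ℂ)‖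
        < ε := by
  classical
  intro ε hε
  have hpi := Real.pi_pos
  obtain ⟨δ₁, hδ₁, hE1⟩ := hP1 (1/2) (by norm_num)
  obtain ⟨δ', hδ', ζ, hζ, hE2⟩ := hP2 δ₁ hδ₁
  set ε₃ : ℝ := min (1/2) (ε/16) with hε₃def
  have hε₃pos : 0 < ε₃ := lt_min (by norm_num) (by linarith)
  have hε₃half : ε₃ ≤ 1/2 := min_le_left _ _
  have hε₃ε : ε₃ ≤ ε/16 := min_le_right _ _
  set a : ℝ := min δ' (Real.sqrt (ζ*ε)/4) with hadef
  have hapos : 0 < a := lt_min hδ' (by positivity)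
  have haδ' : a ≤ δ' := min_le_left _ _
  have ha2 : a^2 ≤ ζ*ε/16 := by
    have h1 : a ≤ Real.sqrt (ζ*ε)/4 := min_le_right _ _
    have h2 : Real.sqrt (ζ*ε)^2 = ζ*ε := Real.sq_sqrt (by positivity)
    nlinarith [Real.sqrt_nonneg (ζ*ε), hapos.le]
  have hE3 := hP3 ε₃ hε₃pos a hapos
  have hE4 : ∀ᶠ L in evenAtTop, 64 / (σ2 * π^2 * ε) ≤ (M L:ℝ)^2 / Real.log L :=
    hM2.eventually_ge_atTop _
  have hE5 : ∀ᶠ L : ℕ in Filter.atTop,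
      3 ≤ L ∧ π/a ≤ (L:ℝ) ∧ ((L:ℝ)^2)⁻¹ ≤ ε/8 := by
    have hcast : Tendsto (fun L : ℕ => (L:ℝ)) Filter.atTop Filter.atTop :=
      tendsto_natCast_atTop_atTop
    filter_upwards [Filter.eventually_ge_atTop 3, hcast.eventually_ge_atTop (π/a),
      hcast.eventually_ge_atTop (8/ε), hcast.eventually_ge_atTop 1] with L h1 h2 h3 h4
    refine ⟨h1, h2, ?_⟩
    have h5 : (8/ε) ≤ (L:ℝ)^2 := by nlinarith
    have h6 : 1/((L:ℝ)^2) ≤ 1/(8/ε) := one_div_le_one_div_of_le (by positivity) h5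
    rw [one_div_div] at h6
    rw [← one_div]
    linarith
  have hle : evenAtTop ≤ Filter.atTop := by rw [evenAtTop]; exact inf_le_left
  have hEeven : ∀ᶠ L : ℕ in evenAtTop, Even L := by
    rw [evenAtTop]
    exact Filter.eventually_inf_principal.mpr (Filter.Eventually.of_forall fun L h => h)
  filter_upwards [hE1, hE2, hE3, hE4, hE5.filter_mono hle, hEeven]
    with L h1 h2 h3 h4 h5 hLeven
  obtain ⟨hL3, hLa, hLε⟩ := h5
  intro x hx
  have hL0 : L ≠ 0 := by omega
  obtain ⟨c0, hc0⟩ := hLeven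
  have hc02 : 2 ≤ c0 := by omega
  set c : ℤ := (c0 : ℤ) with hcdef
  have hc : (L:ℝ) = 2 * c := by rw [hcdef, hc0]; push_cast; ring
  have hcL : (L:ℤ) = 2 * c := by exact_mod_cast hc
  have hc1 : 1 ≤ c := by omega
  have hLR : (0:ℝ) < (L:ℝ) := by exact_mod_cast Nat.pos_of_ne_zero hL0
  have hMpos : 0 < M L := (hMeven L).2
  have hMR : (0:ℝ) < (M L : ℝ) := by exact_mod_cast hMpos
  have habs1 : ∀ θ, |phiOf (M L) (q L) θ| ≤ 1 :=
    abs_phiOf_le_one (M L) (q L) (hP0 L ⟨c0, hc0⟩ (by omega))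
  have hmemy : ∀ y ∈ (Tset (L:ℝ)).erase 0,
      y ≠ 0 ∧ (-c < y.1 ∧ y.1 ≤ c) ∧ (-c < y.2 ∧ y.2 ≤ c) := by
    intro y hy
    rw [Finset.mem_erase, tset_eq L c hc, Finset.mem_product, Finset.mem_Ioc,
      Finset.mem_Ioc] at hy
    exact ⟨hy.1, hy.2.1, hy.2.2⟩
  -- the classification of each Fourier mode
  have hclass : ∀ y ∈ (Tset (L:ℝ)).erase 0,
      0 < 1 - phiOf (M L) (q L) (fourierTheta L y) ∧
      ((supNorm (fourierTheta L y) ≤ δ₁ / (M L)) →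
        |phiOf (M L) (q L) (fourierTheta L y)| / (1 - phiOf (M L) (q L) (fourierTheta L y))
          ≤ (L:ℝ)^2 / (σ2 * π^2 * (M L:ℝ)^2 * sqNorm y)) ∧
      (¬(supNorm (fourierTheta L y) ≤ δ₁ / (M L)) → (supNorm (fourierTheta L y) ≤ a) →
        |phiOf (M L) (q L) (fourierTheta L y)| / (1 - phiOf (M L) (q L) (fourierTheta L y))
          ≤ 1/ζ) ∧
      (¬(supNorm (fourierTheta L y) ≤ δ₁ / (M L)) → ¬(supNorm (fourierTheta L y) ≤ a) →
        |phiOf (M L) (q L) (fourierTheta L y)| / (1 - phiOf (M L) (q L) (fourierTheta L y))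
          ≤ 2*ε₃) := by
    intro y hy
    obtain ⟨hy0, hy1, hy2⟩ := hmemy y hy
    have hθ0 : fourierTheta L y ≠ 0 := fourierTheta_ne_zero L hL0 y hy0
    have hsqpos : 0 < sqNorm y := by
      rcases (by
        by_contra h
        push_neg at h
        exact hy0 (Prod.ext h.1 h.2) : y.1 ≠ 0 ∨ y.2 ≠ 0) with h | h
      · have : (0:ℝ) < ((y.1:ℝ))^2 := by
          have : ((y.1:ℝ)) ≠ 0 := by exact_mod_cast h
          positivity
        rw [sqNorm]; nlinarith [sq_nonneg ((y.2:ℝ))]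
      · have : (0:ℝ) < ((y.2:ℝ))^2 := by
          have : ((y.2:ℝ)) ≠ 0 := by exact_mod_cast h
          positivity
        rw [sqNorm]; nlinarith [sq_nonneg ((y.1:ℝ))]
    by_cases hp1 : supNorm (fourierTheta L y) ≤ δ₁ / (M L)
    · -- region I
      have hio := h1 (fourierTheta L y) hθ0 hp1
      rw [Set.mem_Ioo] at hio
      have hsqR : 0 < sqNormR (fourierTheta L y) := by
        rw [sqNormR_fourierTheta L hL0]
        positivity
      have hD : 0 < σ2 * (M L:ℝ)^2 * sqNormR (fourierTheta L y) / 2 := by positivity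
      have hlow0 := hio.1
      rw [show (1:ℝ) - 1/2 = 1/2 by norm_num] at hlow0
      have hlow := (lt_div_iff₀ hD).mp hlow0
      have hDI : (1/2) * (σ2 * (M L:ℝ)^2 * sqNormR (fourierTheta L y) / 2)
          = σ2 * π^2 * (M L:ℝ)^2 * sqNorm y / (L:ℝ)^2 := by
        rw [sqNormR_fourierTheta L hL0]
        field_simp
        ring
      rw [hDI] at hlow
      have hDIpos : 0 < σ2 * π^2 * (M L:ℝ)^2 * sqNorm y / (L:ℝ)^2 := by positivity
      have hpos : 0 < 1 - phiOf (M L) (q L) (fourierTheta L y) := lt_trans hDIpos hlow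
      refine ⟨hpos, fun _ => ?_, fun hn _ => absurd hp1 hn, fun hn _ => absurd hp1 hn⟩
      have hdd : |phiOf (M L) (q L) (fourierTheta L y)| /
            (1 - phiOf (M L) (q L) (fourierTheta L y))
          ≤ 1 / (σ2 * π^2 * (M L:ℝ)^2 * sqNorm y / (L:ℝ)^2) :=
        div_le_div₀ zero_le_one (habs1 _) hDIpos hlow.le
      calc |phiOf (M L) (q L) (fourierTheta L y)| /
            (1 - phiOf (M L) (q L) (fourierTheta L y))
          ≤ 1 / (σ2 * π^2 * (M L:ℝ)^2 * sqNorm y / (L:ℝ)^2) := hdd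
        _ = (L:ℝ)^2 / (σ2 * π^2 * (M L:ℝ)^2 * sqNorm y) := by
            rw [one_div_div]
    · by_cases hp2 : supNorm (fourierTheta L y) ≤ a
      · -- region II
        have hgt : 1 - phiOf (M L) (q L) (fourierTheta L y) > ζ :=
          h2 (fourierTheta L y) (le_trans hp2 haδ') hp1
        have hpos : 0 < 1 - phiOf (M L) (q L) (fourierTheta L y) := lt_trans hζ hgt
        exact ⟨hpos, fun hp => absurd hp hp1, fun _ _ =>
          div_le_div₀ zero_le_one (habs1 _) hζ hgt.le, fun _ hn => absurd hp2 hn⟩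
      · -- region III
        have hππ : supNorm (fourierTheta L y) ≤ π :=
          supNorm_fourierTheta_le_pi L c hc hc1 y hy1 hy2
        have hsm : |phiOf (M L) (q L) (fourierTheta L y)| < ε₃ := h3 (fourierTheta L y) hππ hp2
        have hφle : phiOf (M L) (q L) (fourierTheta L y) ≤ 1/2 := by
          have := le_abs_self (phiOf (M L) (q L) (fourierTheta L y))
          linarith
        have hpos : 0 < 1 - phiOf (M L) (q L) (fourierTheta L y) := by linarith
        refine ⟨hpos, fun hp => absurd hp hp1, fun _ hp => absurd hp hp2, fun _ _ => ?_⟩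
        have hhalf : (1:ℝ)/2 ≤ 1 - phiOf (M L) (q L) (fourierTheta L y) := by linarith
        have := div_le_div₀ hε₃pos.le hsm.le (by norm_num : (0:ℝ) < 1/2) hhalf
        calc |phiOf (M L) (q L) (fourierTheta L y)| /
              (1 - phiOf (M L) (q L) (fourierTheta L y))
            ≤ ε₃ / (1/2) := this
          _ = 2*ε₃ := by ring
  -- decomposition 1/(1-φ) = 1 + φ/(1-φ)
  have hdec : ∀ y ∈ (Tset (L:ℝ)).erase 0,
      eL L x y / ((1 - phiOf (M L) (q L) (fourierTheta L y) : ℝ) : ℂ)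
        = eL L x y + eL L x y *
            (((phiOf (M L) (q L) (fourierTheta L y) /
                (1 - phiOf (M L) (q L) (fourierTheta L y)) : ℝ)) : ℂ) := by
    have hdec0 : ∀ (E : ℂ) (t : ℝ), 0 < 1 - t →
        E / ((1 - t : ℝ) : ℂ) = E + E * (((t / (1 - t) : ℝ)) : ℂ) := by
      intro E t ht
      have hne : ((1:ℂ) - (t:ℂ)) ≠ 0 := by
        have h' : ((1 - t : ℝ) : ℂ) ≠ 0 := Complex.ofReal_ne_zero.mpr (ne_of_gt ht)
        push_cast at h'
        exact h'
      rw [Complex.ofReal_div]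
      push_cast
      field_simp
      ring
    intro y hy
    exact hdec0 _ _ (hclass y hy).1
  rw [Finset.sum_congr rfl hdec, Finset.sum_add_distrib]
  -- the character sum is -1
  have hchar : ∑ y ∈ (Tset (L:ℝ)).erase 0, eL L x y = -1 := char_sum_erase L c hc hc1 x hx
  set S : ℝ := ∑ y ∈ (Tset (L:ℝ)).erase 0,
      |phiOf (M L) (q L) (fourierTheta L y)| /
        (1 - phiOf (M L) (q L) (fourierTheta L y)) with hSdef
  have hnorm : ‖(∑ y ∈ (Tset (L:ℝ)).erase 0, eL L x y) +
      ∑ y ∈ (Tset (L:ℝ)).erase 0, eL L x y *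
        (((phiOf (M L) (q L) (fourierTheta L y) /
            (1 - phiOf (M L) (q L) (fourierTheta L y)) : ℝ)) : ℂ)‖ ≤ 1 + S := by
    refine le_trans (norm_add_le _ _) ?_
    have hn1 : ‖∑ y ∈ (Tset (L:ℝ)).erase 0, eL L x y‖ = 1 := by
      rw [hchar]; simp
    have hn2 : ‖∑ y ∈ (Tset (L:ℝ)).erase 0, eL L x y *
        (((phiOf (M L) (q L) (fourierTheta L y) /
            (1 - phiOf (M L) (q L) (fourierTheta L y)) : ℝ)) : ℂ)‖ ≤ S := by
      refine le_trans (norm_sum_le _ _) ?_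
      rw [hSdef]
      refine Finset.sum_le_sum fun y hy => ?_
      have hpos := (hclass y hy).1
      rw [norm_mul, eL_norm L hL0, one_mul, Complex.norm_real, Real.norm_eq_abs,
        abs_div, abs_of_pos hpos]
    rw [hn1]
    linarith
  -- the three filtered sub-sums
  have hlogc : Real.log c ≤ Real.log L := by
    apply Real.log_le_log (by exact_mod_cast hc1)
    rw [hc]
    have : (1:ℝ) ≤ (c:ℝ) := by exact_mod_cast hc1
    linarith
  have hlog1 : 1 ≤ Real.log L := by
    rw [Real.le_log_iff_exp_le hLR]
    have h9 := Real.exp_one_lt_d9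
    have h10 : (3:ℝ) ≤ (L:ℝ) := by exact_mod_cast hL3
    linarith
  have hlogpos : 0 < Real.log L := by linarith
  have h4' : 64 / (σ2 * π^2 * ε) * Real.log L ≤ (M L:ℝ)^2 := (le_div_iff₀ hlogpos).mp h4
  -- Region I sum bound
  have hSI : ∑ y ∈ Finset.filter (fun y => supNorm (fourierTheta L y) ≤ δ₁ / (M L))
        ((Tset (L:ℝ)).erase 0),
        |phiOf (M L) (q L) (fourierTheta L y)| / (1 - phiOf (M L) (q L) (fourierTheta L y))
      ≤ ε/4 * (L:ℝ)^2 := by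
    have step1 : ∑ y ∈ Finset.filter (fun y => supNorm (fourierTheta L y) ≤ δ₁ / (M L))
          ((Tset (L:ℝ)).erase 0),
          |phiOf (M L) (q L) (fourierTheta L y)| / (1 - phiOf (M L) (q L) (fourierTheta L y))
        ≤ ∑ y ∈ Finset.filter (fun y => supNorm (fourierTheta L y) ≤ δ₁ / (M L))
          ((Tset (L:ℝ)).erase 0),
          (L:ℝ)^2 / (σ2 * π^2 * (M L:ℝ)^2) * (1 / sqNorm y) := by
      refine Finset.sum_le_sum fun y hy => ?_
      rw [Finset.mem_filter] at hy
      have hb := (hclass y hy.1).2.1 hy.2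
      calc |phiOf (M L) (q L) (fourierTheta L y)| / (1 - phiOf (M L) (q L) (fourierTheta L y))
          ≤ (L:ℝ)^2 / (σ2 * π^2 * (M L:ℝ)^2 * sqNorm y) := hb
        _ = (L:ℝ)^2 / (σ2 * π^2 * (M L:ℝ)^2) * (1 / sqNorm y) := by
            rw [← div_div, div_eq_mul_one_div]
    have hsq0 : ∀ y ∈ (Tset (L:ℝ)).erase 0, 0 ≤ (L:ℝ)^2 / (σ2 * π^2 * (M L:ℝ)^2) * (1 / sqNorm y) := by
      intro y hy
      have h0 : (0:ℝ) ≤ sqNorm y := by rw [sqNorm]; positivity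
      positivity
    have step2 : ∑ y ∈ Finset.filter (fun y => supNorm (fourierTheta L y) ≤ δ₁ / (M L))
          ((Tset (L:ℝ)).erase 0), (L:ℝ)^2 / (σ2 * π^2 * (M L:ℝ)^2) * (1 / sqNorm y)
        ≤ ∑ y ∈ (Tset (L:ℝ)).erase 0, (L:ℝ)^2 / (σ2 * π^2 * (M L:ℝ)^2) * (1 / sqNorm y) :=
      Finset.sum_le_sum_of_subset_of_nonneg (Finset.filter_subset _ _) (fun y hy _ => hsq0 y hy)
    have step3 : ∑ y ∈ (Tset (L:ℝ)).erase 0, (L:ℝ)^2 / (σ2 * π^2 * (M L:ℝ)^2) * (1 / sqNorm y)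
        ≤ (L:ℝ)^2 / (σ2 * π^2 * (M L:ℝ)^2) * (8 * (1 + Real.log c)) := by
      rw [← Finset.mul_sum]
      apply mul_le_mul_of_nonneg_left _ (by positivity)
      have := sum_inv_sqNorm_le c hc1
      rw [tset_eq L c hc]
      exact this
    have hnum : (L:ℝ)^2 / (σ2 * π^2 * (M L:ℝ)^2) * (8 * (1 + Real.log c)) ≤ ε/4 * (L:ℝ)^2 := by
      have hMden : (0:ℝ) < σ2 * π^2 * (M L:ℝ)^2 := by positivity
      have h6 : (ε/4)*(σ2*π^2) * (64 / (σ2 * π^2 * ε) * Real.log L)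
          ≤ (ε/4)*(σ2*π^2) * (M L:ℝ)^2 := mul_le_mul_of_nonneg_left h4' (by positivity)
      have h7 : (ε/4)*(σ2*π^2) * (64 / (σ2 * π^2 * ε) * Real.log L) = 16 * Real.log L := by
        field_simp
        ring
      rw [h7] at h6
      have h8 : 8 * (1 + Real.log c) ≤ 16 * Real.log L := by linarith
      rw [div_mul_eq_mul_div, div_le_iff₀ hMden]
      have h9 : (L:ℝ)^2 * (8 * (1 + Real.log c)) ≤ (L:ℝ)^2 * (16 * Real.log L) :=
        mul_le_mul_of_nonneg_left h8 (by positivity)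
      calc (L:ℝ)^2 * (8 * (1 + Real.log c)) ≤ (L:ℝ)^2 * (16 * Real.log L) := h9
        _ ≤ (L:ℝ)^2 * ((ε/4)*(σ2*π^2) * (M L:ℝ)^2) := by
            apply mul_le_mul_of_nonneg_left h6 (by positivity)
        _ = ε/4 * (L:ℝ)^2 * (σ2 * π^2 * (M L:ℝ)^2) := by ring
    linarith
  -- Region II sum bound
  have hSII : ∑ y ∈ Finset.filter (fun y => supNorm (fourierTheta L y) ≤ a)
        (Finset.filter (fun y => ¬ supNorm (fourierTheta L y) ≤ δ₁ / (M L))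
          ((Tset (L:ℝ)).erase 0)),
        |phiOf (M L) (q L) (fourierTheta L y)| / (1 - phiOf (M L) (q L) (fourierTheta L y))
      ≤ ε/8 * (L:ℝ)^2 := by
    set F2 := Finset.filter (fun y => supNorm (fourierTheta L y) ≤ a)
        (Finset.filter (fun y => ¬ supNorm (fourierTheta L y) ≤ δ₁ / (M L))
          ((Tset (L:ℝ)).erase 0)) with hF2
    have hsum2 : ∑ y ∈ F2,
        |phiOf (M L) (q L) (fourierTheta L y)| / (1 - phiOf (M L) (q L) (fourierTheta L y))
        ≤ (F2.card : ℝ) * (1/ζ) := by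
      have := Finset.sum_le_card_nsmul F2
        (fun y => |phiOf (M L) (q L) (fourierTheta L y)| /
          (1 - phiOf (M L) (q L) (fourierTheta L y))) (1/ζ) ?_
      · rwa [nsmul_eq_mul] at this
      · intro y hy
        rw [hF2, Finset.mem_filter, Finset.mem_filter] at hy
        exact (hclass y hy.1.1).2.2.1 hy.1.2 hy.2
    set b : ℤ := ⌊a*(L:ℝ)/(2*π)⌋ with hbdef
    have hbnonneg : 0 ≤ b := Int.floor_nonneg.mpr (by positivity)
    have hsub : F2 ⊆ Finset.Icc (-b) b ×ˢ Finset.Icc (-b) b := by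
      intro y hy
      rw [hF2, Finset.mem_filter, Finset.mem_filter] at hy
      have hp2 := hy.2
      rw [supNorm, fourierTheta, max_le_iff] at hp2
      have key : ∀ t : ℤ, |2*π*(t:ℝ)/L| ≤ a → -b ≤ t ∧ t ≤ b := by
        intro t ht
        rw [abs_div, abs_of_pos hLR, div_le_iff₀ hLR,
          abs_mul, abs_of_pos (by linarith : (0:ℝ) < 2*π)] at ht
        have h8 : |(t:ℝ)| ≤ a*(L:ℝ)/(2*π) := by
          rw [le_div_iff₀ (by linarith : (0:ℝ) < 2*π)]
          nlinarith [abs_nonneg (t:ℝ)]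
        have h9 : (-t) ≤ b := Int.le_floor.mpr (by push_cast; linarith [neg_abs_le (t:ℝ)])
        have h10 : t ≤ b := Int.le_floor.mpr (by push_cast; linarith [le_abs_self (t:ℝ)])
        exact ⟨by omega, h10⟩
      rw [Finset.mem_product, Finset.mem_Icc, Finset.mem_Icc]
      exact ⟨key y.1 hp2.1, key y.2 hp2.2⟩
    have hcard : (F2.card : ℝ) ≤ 4*a^2*(L:ℝ)^2/π^2 := by
      have hcc := Finset.card_le_card hsub
      have hcardbox : ((Finset.Icc (-b) b ×ˢ Finset.Icc (-b) b).card : ℝ) = ((2*b+1 : ℤ) : ℝ)^2 := by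
        rw [Finset.card_product, Int.card_Icc]
        have h11 : (b + 1 - -b) = 2*b+1 := by ring
        rw [h11]
        have h12 : (((2*b+1).toNat : ℕ) : ℝ) = ((2*b+1 : ℤ) : ℝ) := by
          exact_mod_cast Int.toNat_of_nonneg (by omega)
        push_cast
        push_cast at h12
        rw [h12]
        ring
      have hble : ((b:ℤ):ℝ) ≤ a*(L:ℝ)/(2*π) := Int.floor_le _
      have haL : π ≤ a * (L:ℝ) := by
        rw [div_le_iff₀ hapos] at hLa
        linarith [hLa]
      have h13 : ((2*b+1 : ℤ) : ℝ) ≤ 2*(a*(L:ℝ)/(2*π)) + 1 := by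
        push_cast
        push_cast at hble
        linarith
      have h14 : 2*(a*(L:ℝ)/(2*π)) + 1 ≤ 2*(a*(L:ℝ)/π) := by
        have heq : 2*(a*(L:ℝ)/(2*π)) = a*(L:ℝ)/π := by
          field_simp
        have hge : 1 ≤ a*(L:ℝ)/π := (one_le_div hpi).mpr haL
        rw [heq]
        linarith
      have h15 : (0:ℝ) ≤ ((2*b+1 : ℤ) : ℝ) := by exact_mod_cast (by omega : (0:ℤ) ≤ 2*b+1)
      have h16 : ((2*b+1 : ℤ) : ℝ)^2 ≤ (2*(a*(L:ℝ)/π))^2 := by nlinarith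
      have h17 : (2*(a*(L:ℝ)/π))^2 = 4*a^2*(L:ℝ)^2/π^2 := by
        field_simp
        ring
      have h18 : ((F2.card : ℕ) : ℝ) ≤ ((Finset.Icc (-b) b ×ˢ Finset.Icc (-b) b).card : ℝ) := by
        exact_mod_cast hcc
      rw [hcardbox] at h18
      linarith
    have hπ2 : (9:ℝ) ≤ π^2 := by nlinarith [Real.pi_gt_three]
    have hfinal : 4*a^2*(L:ℝ)^2/π^2 * (1/ζ) ≤ ε/8 * (L:ℝ)^2 := by
      have hq : 4*a^2*(L:ℝ)^2/π^2 * (1/ζ) = (4*a^2/(π^2*ζ)) * (L:ℝ)^2 := by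
        field_simp
      rw [hq]
      apply mul_le_mul_of_nonneg_right _ (by positivity)
      rw [div_le_iff₀ (by positivity : (0:ℝ) < π^2*ζ)]
      nlinarith [ha2, hζ, hπ2, hε.le,
        mul_nonneg (mul_nonneg (by linarith : (0:ℝ) ≤ π^2 - 9) hζ.le) hε.le]
    have h19 : (F2.card : ℝ) * (1/ζ) ≤ 4*a^2*(L:ℝ)^2/π^2 * (1/ζ) :=
      mul_le_mul_of_nonneg_right hcard (by positivity)
    linarith
  -- Region III sum bound
  have hcardT : ((Tset (L:ℝ)).card : ℝ) = (L:ℝ)^2 := by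
    rw [tset_eq L c hc, Finset.card_product, Int.card_Ioc]
    have h20 : (c - -c) = (L:ℤ) := by omega
    rw [h20]
    push_cast [Int.toNat_natCast]
    ring
  have hSIII : ∑ y ∈ Finset.filter (fun y => ¬ supNorm (fourierTheta L y) ≤ a)
        (Finset.filter (fun y => ¬ supNorm (fourierTheta L y) ≤ δ₁ / (M L))
          ((Tset (L:ℝ)).erase 0)),
        |phiOf (M L) (q L) (fourierTheta L y)| / (1 - phiOf (M L) (q L) (fourierTheta L y))
      ≤ ε/8 * (L:ℝ)^2 := by
    set F3 := Finset.filter (fun y => ¬ supNorm (fourierTheta L y) ≤ a)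
        (Finset.filter (fun y => ¬ supNorm (fourierTheta L y) ≤ δ₁ / (M L))
          ((Tset (L:ℝ)).erase 0)) with hF3
    have hsum3 : ∑ y ∈ F3,
        |phiOf (M L) (q L) (fourierTheta L y)| / (1 - phiOf (M L) (q L) (fourierTheta L y))
        ≤ (F3.card : ℝ) * (2*ε₃) := by
      have := Finset.sum_le_card_nsmul F3
        (fun y => |phiOf (M L) (q L) (fourierTheta L y)| /
          (1 - phiOf (M L) (q L) (fourierTheta L y))) (2*ε₃) ?_
      · rwa [nsmul_eq_mul] at this
      · intro y hy
        rw [hF3, Finset.mem_filter, Finset.mem_filter] at hy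
        exact (hclass y hy.1.1).2.2.2 hy.1.2 hy.2
    have hsub3 : F3 ⊆ Tset (L:ℝ) := by
      refine subset_trans (Finset.filter_subset _ _) ?_
      refine subset_trans (Finset.filter_subset _ _) ?_
      exact Finset.erase_subset _ _
    have hcard3 : (F3.card : ℝ) ≤ (L:ℝ)^2 := by
      rw [← hcardT]
      exact_mod_cast Finset.card_le_card hsub3
    have h21 : (F3.card : ℝ) * (2*ε₃) ≤ (L:ℝ)^2 * (2*ε₃) :=
      mul_le_mul_of_nonneg_right hcard3 (by positivity)
    have h22 : (L:ℝ)^2 * (2*ε₃) ≤ (L:ℝ)^2 * (ε/8) := by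
      apply mul_le_mul_of_nonneg_left _ (by positivity)
      linarith
    calc ∑ y ∈ F3, |phiOf (M L) (q L) (fourierTheta L y)| /
          (1 - phiOf (M L) (q L) (fourierTheta L y))
        ≤ (F3.card : ℝ) * (2*ε₃) := hsum3
      _ ≤ (L:ℝ)^2 * (ε/8) := le_trans h21 h22
      _ = ε/8 * (L:ℝ)^2 := by ring
  -- total bound on S
  have hStotal : S ≤ ε/2 * (L:ℝ)^2 := by
    rw [hSdef,
      ← Finset.sum_filter_add_sum_filter_not ((Tset (L:ℝ)).erase 0)
        (fun y => supNorm (fourierTheta L y) ≤ δ₁ / (M L)),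
      ← Finset.sum_filter_add_sum_filter_not
        (Finset.filter (fun y => ¬ supNorm (fourierTheta L y) ≤ δ₁ / (M L))
          ((Tset (L:ℝ)).erase 0))
        (fun y => supNorm (fourierTheta L y) ≤ a)]
    linarith
  have hL2pos : (0:ℝ) < (L:ℝ)^2 := by positivity
  calc ((L:ℝ)^2)⁻¹ * ‖(∑ y ∈ (Tset (L:ℝ)).erase 0, eL L x y) +
      ∑ y ∈ (Tset (L:ℝ)).erase 0, eL L x y *
        (((phiOf (M L) (q L) (fourierTheta L y) /
            (1 - phiOf (M L) (q L) (fourierTheta L y)) : ℝ)) : ℂ)‖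
      ≤ ((L:ℝ)^2)⁻¹ * (1 + S) := mul_le_mul_of_nonneg_left hnorm (by positivity)
    _ = ((L:ℝ)^2)⁻¹ + ((L:ℝ)^2)⁻¹ * S := by ring
    _ ≤ ε/8 + ((L:ℝ)^2)⁻¹ * (ε/2 * (L:ℝ)^2) := by
        have h23 := mul_le_mul_of_nonneg_left hStotal (inv_nonneg.mpr hL2pos.le)
        linarith
    _ = ε/8 + ε/2 * (((L:ℝ)^2)⁻¹ * (L:ℝ)^2) := by ring
    _ = ε/8 + ε/2 := by rw [inv_mul_cancel₀ (ne_of_gt hL2pos), mul_one]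
    _ < ε := by linarith
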